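/- The number of closed itemsets can be exponential in the maximum transaction length: for the stream of n = L transactions t_i = I \ {i} over I = {1,...,L+1}, the number of distinct nonempty intersections of nonempty subsets of transactions is 2^L − 1. -/
import Mathlib


/-- For `I = {1,…,L+1}` and transactions `t i = I \ {i}` (`1 ≤ i ≤ L`), the number of
distinct (nonempty) intersections `⋂_{j ∈ S} t j` over nonempty `S ⊆ {1,…,L}` is
`2 ^ L − 1`. Here the intersection over `S` of the transactions is rendered as the set
of items of `I` lying in every `t j`, `j ∈ S`. -/
theorem stmt6 (L : ℕ) (hL : 1 ≤ L) :
    (((Finset.Icc 1 L).powerset.filter (fun S => S.Nonempty)).image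
      (fun S => (Finset.Icc 1 (L + 1)).filter
        (fun x => ∀ j ∈ S, x ∈ Finset.Icc 1 (L + 1) \ {j}))).card = 2 ^ L - 1 := by
  have hf : ∀ S ∈ (Finset.Icc 1 L).powerset.filter (fun S => S.Nonempty),
      (Finset.Icc 1 (L + 1)).filter
        (fun x => ∀ j ∈ S, x ∈ Finset.Icc 1 (L + 1) \ {j}) = Finset.Icc 1 (L + 1) \ S := by
    intro S hS
    ext x
    simp only [Finset.mem_filter, Finset.mem_sdiff, Finset.mem_singleton]
    constructor
    · rintro ⟨hx, h⟩
      exact ⟨hx, fun hxS => (h x hxS).2 rfl⟩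
    · rintro ⟨hx, hxS⟩
      exact ⟨hx, fun j hj => ⟨hx, fun e => hxS (e ▸ hj)⟩⟩
  rw [Finset.card_image_of_injOn]
  · have : (Finset.Icc 1 L).powerset.filter (fun S => S.Nonempty)
        = (Finset.Icc 1 L).powerset.erase ∅ := by
      ext T
      simp [Finset.nonempty_iff_ne_empty, and_comm]
    rw [this, Finset.card_erase_of_mem (by simp)]
    simp
  · intro S hS S' hS' h
    replace h : Finset.Icc 1 (L + 1) \ S = Finset.Icc 1 (L + 1) \ S' := by
      rw [← hf S hS, ← hf S' hS']; exact h
    simp only [Finset.mem_coe, Finset.mem_filter, Finset.mem_powerset] at hS hS'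
    have hsub : S ⊆ Finset.Icc 1 (L + 1) :=
      hS.1.trans (Finset.Icc_subset_Icc_right (by omega))
    have hsub' : S' ⊆ Finset.Icc 1 (L + 1) :=
      hS'.1.trans (Finset.Icc_subset_Icc_right (by omega))
    have := congrArg (fun T => Finset.Icc 1 (L + 1) \ T) h
    simpa [sdiff_sdiff_right_self, Finset.inf_eq_inter,
      Finset.inter_eq_right.mpr hsub, Finset.inter_eq_right.mpr hsub'] using this
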